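/- Let k ≥ 1 be an integer. Let S be a finite set, and suppose that for each y ∈ S and each positive integer r a subset C(y,r) ⊆ S is given such that: (i) y ∈ C(y,1); (ii) C(y,r) ⊆ C(y,r') whenever r ≤ r'; and (iii) for all y, y' ∈ S and positive integers r' ≤ r, if C(y,2r) ∩ C(y',2r') ≠ ∅ then y' ∈ C(y,6r). Let T ⊆ S be a nonempty subset and let r: T → {1, 2, 3, …} be a function such that |C(y, 6·r(y))| ≤ 12^k · |C(y, r(y))| for every y ∈ T. Then there exist finitely many elements y₁, …, y_q ∈ T such that, writing r_i = r(y_i): (a) the sets C(y_i, 2r_i), i = 1, …, q, are pairwise disjoint; (b) T ⊆ C(y₁,6r₁) ∪ … ∪ C(y_q,6r_q); and (c) |T|/12^k ≤ Σ_{i=1}^q |C(y_i, r_i)| ≤ |S|. -/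

import Mathlib

/-- Abstract greedy selection from the proof of Proposition 4.13 (removal of folded
parts): given a finite set `S` with balls `C y r`, a nonempty subset `T ⊆ S` and
radii `r y ≥ 1` on `T` satisfying the doubling bound `|C y (6·r y)| ≤ 12^k·|C y (r y)|`,
one can select `y₁, …, y_q ∈ T` with `C (y i) (2·r (y i))` pairwise disjoint,
`C (y i) (6·r (y i))` covering `T`, and
`|T|/12^k ≤ Σ |C (y i) (r (y i))| ≤ |S|`. -/
theorem greedy_folded_selection {γ : Type*} [DecidableEq γ] (k : ℕ) (hk : 1 ≤ k)
    (S : Finset γ)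
    (C : γ → ℕ → Finset γ)
    (hsub : ∀ y ∈ S, ∀ r : ℕ, 1 ≤ r → C y r ⊆ S)
    (hself : ∀ y ∈ S, y ∈ C y 1)
    (hmono : ∀ y ∈ S, ∀ r r' : ℕ, 1 ≤ r → r ≤ r' → C y r ⊆ C y r')
    (htri : ∀ y ∈ S, ∀ y' ∈ S, ∀ r r' : ℕ, 1 ≤ r' → r' ≤ r →
      (C y (2 * r) ∩ C y' (2 * r')).Nonempty → y' ∈ C y (6 * r))
    (T : Finset γ) (hT : T ⊆ S) (hTne : T.Nonempty)
    (r : γ → ℕ) (hr1 : ∀ y ∈ T, 1 ≤ r y)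
    (hdbl : ∀ y ∈ T, ((C y (6 * r y)).card : ℝ) ≤ 12 ^ k * ((C y (r y)).card : ℝ)) :
    ∃ (q : ℕ) (y : Fin q → γ), (∀ i, y i ∈ T) ∧
      (∀ i j, i ≠ j →
        Disjoint (C (y i) (2 * r (y i))) (C (y j) (2 * r (y j)))) ∧
      (∀ t ∈ T, ∃ i, t ∈ C (y i) (6 * r (y i))) ∧
      ((T.card : ℝ) / 12 ^ k ≤ ∑ i, ((C (y i) (r (y i))).card : ℝ)) ∧
      (∑ i, ((C (y i) (r (y i))).card : ℝ)) ≤ (S.card : ℝ) := by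
  -- self-membership in big balls
  have hselfbig : ∀ a ∈ T, ∀ m : ℕ, 1 ≤ m → a ∈ C a m := by
    intro a ha m hm
    exact hmono a (hT ha) 1 m le_rfl hm (hself a (hT ha))
  -- greedy construction
  have key : ∀ n : ℕ, ∀ T' : Finset γ, T'.card ≤ n → T' ⊆ T →
      ∃ L : List γ, (∀ a ∈ L, a ∈ T') ∧
        List.Pairwise (fun a b => Disjoint (C a (2 * r a)) (C b (2 * r b))) L ∧
        (∀ t ∈ T', ∃ a ∈ L, t ∈ C a (6 * r a)) := by
    intro n
    induction n with
    | zero =>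
      intro T' hcard _
      refine ⟨[], by simp, by simp, ?_⟩
      intro t ht
      simp [Finset.card_eq_zero.mp (Nat.le_zero.mp hcard)] at ht
    | succ m ih =>
      intro T' hcard hT'T
      rcases T'.eq_empty_or_nonempty with hE | hne
      · refine ⟨[], by simp, by simp, ?_⟩
        intro t ht; simp [hE] at ht
      obtain ⟨y₀, hy₀, hmax⟩ := T'.exists_max_image r hne
      have hy₀T : y₀ ∈ T := hT'T hy₀
      set T'' : Finset γ := T'.filter (fun b => b ∉ C y₀ (6 * r y₀)) with hT''
      have hT''sub : T'' ⊆ T' := Finset.filter_subset _ _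
      have hy₀self : y₀ ∈ C y₀ (6 * r y₀) :=
        hselfbig y₀ hy₀T (6 * r y₀) (le_trans (hr1 y₀ hy₀T) (by omega))
      have hy₀not : y₀ ∉ T'' := by
        simp [hT'', hy₀self]
      have hlt : T''.card < T'.card :=
        Finset.card_lt_card (Finset.ssubset_iff_of_subset hT''sub |>.mpr ⟨y₀, hy₀, hy₀not⟩)
      obtain ⟨L', hL'mem, hL'pw, hL'cov⟩ :=
        ih T'' (by omega) (hT''sub.trans hT'T)
      refine ⟨y₀ :: L', ?_, ?_, ?_⟩
      · intro a ha
        rcases List.mem_cons.mp ha with h | h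
        · exact h ▸ hy₀
        · exact hT''sub (hL'mem a h)
      · refine List.Pairwise.cons ?_ hL'pw
        intro b hb
        have hbT'' : b ∈ T'' := hL'mem b hb
        have hbT : b ∈ T := hT'T (hT''sub hbT'')
        have hbnot : b ∉ C y₀ (6 * r y₀) := by
          have := hbT''; rw [hT'', Finset.mem_filter] at this; exact this.2
        by_contra hnd
        obtain ⟨x, hx⟩ := Finset.not_disjoint_iff_nonempty_inter.mp hnd
        exact hbnot (htri y₀ (hT hy₀T) b (hT hbT) (r y₀) (r b) (hr1 b hbT)
          (hmax b (hT''sub hbT'')) ⟨x, hx⟩)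
      · intro t ht
        by_cases htc : t ∈ C y₀ (6 * r y₀)
        · exact ⟨y₀, List.mem_cons_self, htc⟩
        · obtain ⟨a, haL, hta⟩ := hL'cov t (by simp [hT'', ht, htc])
          exact ⟨a, List.mem_cons_of_mem _ haL, hta⟩
  obtain ⟨L, hLT, hLpw, hLcov⟩ := key T.card T le_rfl (subset_refl T)
  -- nodup
  have hnd : L.Nodup := by
    refine List.Pairwise.imp_of_mem ?_ hLpw
    intro a b ha hb hd
    intro hab
    subst hab
    have : a ∈ C a (2 * r a) :=
      hselfbig a (hLT a ha) (2 * r a) (le_trans (hr1 a (hLT a ha)) (by omega))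
    exact (Finset.disjoint_left.mp hd this) this
  refine ⟨L.length, fun i => L.get i, fun i => hLT _ (List.get_mem L i), ?_, ?_, ?_⟩
  · -- pairwise disjoint
    have hpg := List.pairwise_iff_get.mp hLpw
    intro i j hij
    rcases lt_or_gt_of_ne hij with h | h
    · exact hpg i j h
    · exact (hpg j i h).symm
  · -- cover
    intro t ht
    obtain ⟨a, haL, hta⟩ := hLcov t ht
    obtain ⟨i, hi⟩ := List.mem_iff_get.mp haL
    refine ⟨i, ?_⟩
    show t ∈ C (L.get i) (6 * r (L.get i))
    rw [hi]; exact hta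
  -- counting
  have hsum : ∀ f : γ → ℝ, ∑ i : Fin L.length, f (L.get i) = ∑ a ∈ L.toFinset, f a := by
    intro f
    refine Finset.sum_bij (fun i _ => L.get i)
      (fun i _ => List.mem_toFinset.mpr (List.get_mem L i))
      (fun i _ j _ h => List.nodup_iff_injective_get.mp hnd h)
      (fun a ha => ?_) (fun i _ => rfl)
    obtain ⟨i, hi⟩ := List.mem_iff_get.mp (List.mem_toFinset.mp ha)
    exact ⟨i, Finset.mem_univ i, hi⟩
  set F : Finset γ := L.toFinset with hF
  have hFT : ∀ a ∈ F, a ∈ T := fun a ha => hLT a (List.mem_toFinset.mp ha)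
  have hpairF : ∀ a ∈ F, ∀ b ∈ F, a ≠ b → Disjoint (C a (r a)) (C b (r b)) := by
    intro a ha b hb hab
    have hd : Disjoint (C a (2 * r a)) (C b (2 * r b)) := by
      haveI : Std.Symm (fun a b => Disjoint (C a (2 * r a)) (C b (2 * r b))) :=
        ⟨fun x y h => h.symm⟩
      have := List.Pairwise.forall (l := L)
        hLpw (List.mem_toFinset.mp ha) (List.mem_toFinset.mp hb) hab
      exact this
    refine hd.mono ?_ ?_
    · exact hmono a (hT (hFT a ha)) (r a) (2 * r a) (hr1 a (hFT a ha)) (by omega)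
    · exact hmono b (hT (hFT b hb)) (r b) (2 * r b) (hr1 b (hFT b hb)) (by omega)
  have hupper : ∑ a ∈ F, ((C a (r a)).card : ℕ) ≤ S.card := by
    rw [← Finset.card_biUnion hpairF]
    apply Finset.card_le_card
    intro x hx
    obtain ⟨a, ha, hxa⟩ := Finset.mem_biUnion.mp hx
    exact hsub a (hT (hFT a ha)) (r a) (hr1 a (hFT a ha)) hxa
  have hlow : T.card ≤ ∑ a ∈ F, ((C a (6 * r a)).card : ℕ) := by
    calc T.card ≤ (F.biUnion (fun a => C a (6 * r a))).card := by
          apply Finset.card_le_card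
          intro t ht
          obtain ⟨a, haL, hta⟩ := hLcov t ht
          exact Finset.mem_biUnion.mpr ⟨a, List.mem_toFinset.mpr haL, hta⟩
      _ ≤ ∑ a ∈ F, ((C a (6 * r a)).card : ℕ) := Finset.card_biUnion_le
  have h12 : (0 : ℝ) < 12 ^ k := by positivity
  constructor
  · show (T.card : ℝ) / 12 ^ k ≤ ∑ i : Fin L.length, ((C (L.get i) (r (L.get i))).card : ℝ)
    have e : (∑ i : Fin L.length, ((C (L.get i) (r (L.get i))).card : ℝ))
        = ∑ a ∈ F, ((C a (r a)).card : ℝ) := hsum (fun a => ((C a (r a)).card : ℝ))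
    rw [e, div_le_iff₀ h12]
    calc (T.card : ℝ) ≤ ∑ a ∈ F, ((C a (6 * r a)).card : ℝ) := by
          exact_mod_cast hlow
      _ ≤ ∑ a ∈ F, 12 ^ k * ((C a (r a)).card : ℝ) :=
          Finset.sum_le_sum (fun a ha => hdbl a (hFT a ha))
      _ = (∑ a ∈ F, ((C a (r a)).card : ℝ)) * 12 ^ k := by
          rw [← Finset.mul_sum, mul_comm]
  · show (∑ i : Fin L.length, ((C (L.get i) (r (L.get i))).card : ℝ)) ≤ (S.card : ℝ)
    have e : (∑ i : Fin L.length, ((C (L.get i) (r (L.get i))).card : ℝ))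
        = ∑ a ∈ F, ((C a (r a)).card : ℝ) := hsum (fun a => ((C a (r a)).card : ℝ))
    rw [e]
    calc ∑ a ∈ F, ((C a (r a)).card : ℝ) = ((∑ a ∈ F, (C a (r a)).card : ℕ) : ℝ) := by
          push_cast; ring
      _ ≤ (S.card : ℝ) := by exact_mod_cast hupper
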